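/- Let G be a compact group which is D-quasi-random, with Haar probability measure dg, and let π : G → U(V) be a continuous unitary representation of G on a complex Hilbert space V having no nonzero π-fixed vectors. Then for all u, v ∈ V one has ∫_G | ⟨u, π^g v⟩_V |² dg ≤ D^{-1} · ‖u‖_V² · ‖v‖_V². -/

import Mathlib

open scoped InnerProductSpace

/-- A topological group `G` is `D`-quasi-random if every nontrivial finite-dimensional
continuous unitary representation of `G` has dimension at least `D`. -/
def IsQuasiRandom (G : Type*) [Group G] [TopologicalSpace G] (D : ℕ) : Prop :=
  ∀ (V : Type) [NormedAddCommGroup V] [InnerProductSpace ℂ V] [FiniteDimensional ℂ V]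
    (π : G →* (V ≃ₗᵢ[ℂ] V)),
    (∀ v : V, Continuous fun g : G => π g v) →
    (∃ (g : G) (v : V), π g v ≠ v) →
    D ≤ Module.finrank ℂ V

/-- The subspace of vectors fixed by a unitary representation `π`. -/
def fixedSubmodule {G V : Type*} [Group G] [NormedAddCommGroup V] [InnerProductSpace ℂ V]
    (π : G →* (V ≃ₗᵢ[ℂ] V)) : Submodule ℂ V where
  carrier := {v | ∀ g : G, π g v = v}
  add_mem' := by
    intro a b ha hb g
    rw [map_add, ha g, hb g]
  zero_mem' := by
    intro g
    exact map_zero _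
  smul_mem' := by
    intro c a ha g
    rw [map_smul, ha g]

lemma isClosed_fixedSubmodule {G V : Type*} [Group G] [NormedAddCommGroup V]
    [InnerProductSpace ℂ V] (π : G →* (V ≃ₗᵢ[ℂ] V)) :
    IsClosed ((fixedSubmodule π : Submodule ℂ V) : Set V) := by
  have h : ((fixedSubmodule π : Submodule ℂ V) : Set V) = ⋂ g : G, {v : V | π g v = v} := by
    ext v
    simp only [SetLike.mem_coe, Set.mem_iInter, Set.mem_setOf_eq]
    exact Iff.rfl
  rw [h]
  exact isClosed_iInter fun g => isClosed_eq (π g).continuous continuous_id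

/-- The orthogonal projection `P°_π : V → V` onto the subspace of `π`-fixed vectors,
viewed as a continuous linear map from `V` to itself. -/
noncomputable def fixedProjection {G V : Type*} [Group G] [NormedAddCommGroup V]
    [InnerProductSpace ℂ V] [CompleteSpace V] (π : G →* (V ≃ₗᵢ[ℂ] V)) : V →L[ℂ] V :=
  haveI : CompleteSpace (fixedSubmodule π) := (isClosed_fixedSubmodule π).completeSpace_coe
  (fixedSubmodule π).subtypeL.comp (fixedSubmodule π).orthogonalProjection


open MeasureTheory

lemma continuous_integrable_aux {X E : Type*} [TopologicalSpace X] [CompactSpace X]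
    [MeasurableSpace X] [OpensMeasurableSpace X] [NormedAddCommGroup E]
    {μ : Measure X} [IsFiniteMeasure μ] {f : X → E} (hf : Continuous f) :
    Integrable f μ := by
  rw [← MeasureTheory.integrableOn_univ]
  exact hf.continuousOn.integrableOn_compact' isCompact_univ MeasurableSet.univ

lemma opNorm_aux {V : Type*} [NormedAddCommGroup V] [InnerProductSpace ℂ V]
    (A : V → V) (M : ℝ) (hM : 0 ≤ M)
    (hadd : ∀ x y : V, A (x + y) = A x + A y)
    (hsub : ∀ x y : V, A (x - y) = A x - A y)
    (hsa : ∀ x y : V, ⟪x, A y⟫_ℂ = ⟪A x, y⟫_ℂ)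
    (hpos : ∀ x : V, 0 ≤ (⟪x, A x⟫_ℂ).re)
    (hb : ∀ x : V, (⟪x, A x⟫_ℂ).re ≤ M * ‖x‖ ^ 2) (y : V) :
    ‖A y‖ ≤ M * ‖y‖ := by
  have hzero : A 0 = 0 := by simpa using hsub 0 0
  rcases eq_or_ne (A y) 0 with h0 | h0
  · rw [h0, norm_zero]
    positivity
  have hy0 : y ≠ 0 := by rintro rfl; exact h0 hzero
  have hAy : (0:ℝ) < ‖A y‖ := norm_pos_iff.2 h0
  have hy : (0:ℝ) < ‖y‖ := norm_pos_iff.2 hy0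
  set c : ℝ := ‖y‖ / ‖A y‖ with hc
  have hc0 : 0 ≤ c := div_nonneg hy.le hAy.le
  set x : V := (c : ℂ) • A y with hx
  have hxnorm : ‖x‖ = ‖y‖ := by
    rw [hx, norm_smul, Complex.norm_real, Real.norm_eq_abs, abs_of_nonneg hc0, hc,
      div_mul_cancel₀ _ hAy.ne']
  have hre : ∀ a b : V, (⟪b, A a⟫_ℂ).re = (⟪a, A b⟫_ℂ).re := by
    intro a b
    rw [← Complex.conj_re, inner_conj_symm, ← hsa]
  have expand : ∀ a b : V, (⟪a + b, A (a + b)⟫_ℂ).re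
      = (⟪a, A a⟫_ℂ).re + (⟪b, A b⟫_ℂ).re + 2 * (⟪a, A b⟫_ℂ).re := by
    intro a b
    rw [hadd, inner_add_left, inner_add_right, inner_add_right]
    simp only [Complex.add_re]
    rw [hre a b]
    ring
  have expandsub : ∀ a b : V, (⟪a - b, A (a - b)⟫_ℂ).re
      = (⟪a, A a⟫_ℂ).re + (⟪b, A b⟫_ℂ).re - 2 * (⟪a, A b⟫_ℂ).re := by
    intro a b
    rw [hsub, inner_sub_left, inner_sub_right, inner_sub_right]
    simp only [Complex.sub_re]
    rw [hre a b]
    ring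
  have key : 4 * (⟪x, A y⟫_ℂ).re ≤ M * ‖x + y‖ ^ 2 := by
    have h1 := expand x y
    have h2 := expandsub x y
    have h3 := hb (x + y)
    have h4 := hpos (x - y)
    linarith
  have hxy : ‖x + y‖ ≤ 2 * ‖y‖ := by
    calc ‖x + y‖ ≤ ‖x‖ + ‖y‖ := norm_add_le _ _
    _ = 2 * ‖y‖ := by rw [hxnorm]; ring
  have key2 : 4 * (⟪x, A y⟫_ℂ).re ≤ M * (2 * ‖y‖) ^ 2 := by
    refine key.trans (mul_le_mul_of_nonneg_left ?_ hM)
    exact pow_le_pow_left₀ (norm_nonneg _) hxy 2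
  have hval : (⟪x, A y⟫_ℂ).re = ‖y‖ * ‖A y‖ := by
    rw [hx, inner_smul_left, Complex.conj_ofReal, Complex.re_ofReal_mul]
    have h6 : (⟪A y, A y⟫_ℂ).re = ‖A y‖ ^ 2 := inner_self_eq_norm_sq (𝕜 := ℂ) _
    rw [h6, hc]
    field_simp
  rw [hval] at key2
  have h5 : ‖y‖ * ‖A y‖ ≤ M * ‖y‖ * ‖y‖ := by nlinarith
  nlinarith [h5, hy, mul_pos hy hy]

set_option maxHeartbeats 2000000 in
/-- If `G` is a `D`-quasi-random compact group with Haar probability measure and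
`π : G ↷ V` is a continuous unitary representation on a complex Hilbert space `V` with no
nonzero `π`-fixed vectors, then for all `u, v ∈ V`,
`∫_G |⟨u, π^g v⟩|² dg ≤ D^{-1}·‖u‖²·‖v‖²`. -/
theorem integral_inner_sq_no_fixed_vectors_bound
    {G V : Type*} [Group G] [TopologicalSpace G] [IsTopologicalGroup G] [CompactSpace G]
    [MeasurableSpace G] [BorelSpace G]
    (μ : Measure G) [μ.IsHaarMeasure] [IsProbabilityMeasure μ]
    (D : ℕ) (hD : 0 < D) (hQR : IsQuasiRandom G D)
    [NormedAddCommGroup V] [InnerProductSpace ℂ V] [CompleteSpace V]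
    (π : G →* (V ≃ₗᵢ[ℂ] V)) (hπ : ∀ v : V, Continuous fun g : G => π g v)
    (hfix : ∀ v : V, (∀ g : G, π g v = v) → v = 0)
    (u v : V) :
    ∫ g, ‖⟪u, π g v⟫_ℂ‖ ^ 2 ∂μ ≤ (D : ℝ)⁻¹ * ‖u‖ ^ 2 * ‖v‖ ^ 2 := by
  classical
  -- continuity and integrability of the basic integrands
  have hcont : ∀ x : V, Continuous fun g : G => (⟪π g v, x⟫_ℂ) • (π g v) :=
    fun x => ((hπ v).inner continuous_const).smul (hπ v)
  have hint : ∀ x : V, Integrable (fun g : G => (⟪π g v, x⟫_ℂ) • (π g v)) μ :=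
    fun x => continuous_integrable_aux (hcont x)
  set A : V → V := fun x => ∫ g, (⟪π g v, x⟫_ℂ) • (π g v) ∂μ with hAdef
  set Q : V → ℝ := fun x => ∫ g, ‖⟪x, π g v⟫_ℂ‖ ^ 2 ∂μ with hQdef
  have hAapp : ∀ x : V, A x = ∫ g, (⟪π g v, x⟫_ℂ) • (π g v) ∂μ := fun _ => rfl
  have hQapp : ∀ x : V, Q x = ∫ g, ‖⟪x, π g v⟫_ℂ‖ ^ 2 ∂μ := fun _ => rfl
  have hQint : ∀ x : V, Integrable (fun g : G => ‖⟪x, π g v⟫_ℂ‖ ^ 2) μ :=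
    fun x => continuous_integrable_aux (((continuous_const.inner (hπ v)).norm).pow 2)
  -- basic algebraic properties of A
  have hadd : ∀ x y : V, A (x + y) = A x + A y := by
    intro x y
    rw [hAdef]
    simp only [inner_add_right, add_smul]
    exact integral_add (hint x) (hint y)
  have hsub : ∀ x y : V, A (x - y) = A x - A y := by
    intro x y
    rw [hAdef]
    simp only [inner_sub_right, sub_smul]
    exact integral_sub (hint x) (hint y)
  have hzero : A 0 = 0 := by simpa using hsub 0 0
  have hsmul : ∀ (c : ℂ) (x : V), A (c • x) = c • A x := by
    intro c x
    rw [hAdef]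
    simp only [inner_smul_right, mul_smul]
    exact integral_smul c _
  have hinner_int : ∀ x y : V, ⟪y, A x⟫_ℂ = ∫ g, ⟪π g v, x⟫_ℂ * ⟪y, π g v⟫_ℂ ∂μ := by
    intro x y
    rw [hAapp, ← integral_inner (𝕜 := ℂ) (hint x) y]
    simp_rw [inner_smul_right]
  have hQc : ∀ x : V, ⟪x, A x⟫_ℂ = ((Q x : ℝ) : ℂ) := by
    intro x
    rw [hinner_int x x, hQapp]
    have h1 : ∀ g : G, ⟪π g v, x⟫_ℂ * ⟪x, π g v⟫_ℂ = ((‖⟪x, π g v⟫_ℂ‖ ^ 2 : ℝ) : ℂ) := by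
      intro g
      rw [show (⟪π g v, x⟫_ℂ) = (starRingEnd ℂ) ⟪x, π g v⟫_ℂ from (inner_conj_symm _ _).symm,
        RCLike.conj_mul]
      norm_cast
    simp_rw [h1]
    exact integral_ofReal
  have hQre : ∀ x : V, Q x = (⟪x, A x⟫_ℂ).re := by
    intro x; rw [hQc x]; simp
  have hQnonneg : ∀ x : V, 0 ≤ Q x := by
    intro x
    rw [hQdef]
    exact integral_nonneg fun g => by positivity
  have hsa : ∀ x y : V, ⟪x, A y⟫_ℂ = ⟪A x, y⟫_ℂ := by
    intro x y
    calc ⟪x, A y⟫_ℂ = ∫ g, ⟪π g v, y⟫_ℂ * ⟪x, π g v⟫_ℂ ∂μ := hinner_int y x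
    _ = ∫ g, (starRingEnd ℂ) (⟪π g v, x⟫_ℂ * ⟪y, π g v⟫_ℂ) ∂μ := by
        refine integral_congr_ae (Filter.Eventually.of_forall fun g => ?_)
        simp only [map_mul, inner_conj_symm]
        ring
    _ = (starRingEnd ℂ) (∫ g, ⟪π g v, x⟫_ℂ * ⟪y, π g v⟫_ℂ ∂μ) := integral_conj
    _ = (starRingEnd ℂ) ⟪y, A x⟫_ℂ := by rw [← hinner_int x y]
    _ = ⟪A x, y⟫_ℂ := inner_conj_symm _ _
  have hAbound : ∀ x : V, ‖A x‖ ≤ ‖v‖ ^ 2 * ‖x‖ := by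
    intro x
    rw [hAapp]
    refine (norm_integral_le_of_norm_le_const (C := ‖v‖ ^ 2 * ‖x‖) ?_).trans_eq ?_
    · refine Filter.Eventually.of_forall fun g => ?_
      rw [norm_smul]
      calc ‖⟪π g v, x⟫_ℂ‖ * ‖π g v‖ ≤ (‖π g v‖ * ‖x‖) * ‖π g v‖ := by
            have := norm_inner_le_norm (𝕜 := ℂ) (π g v) x
            nlinarith [norm_nonneg (π g v)]
      _ = ‖v‖ ^ 2 * ‖x‖ := by rw [(π g).norm_map]; ring
    · simp [measure_univ]
  -- group action facts
  have hπmul : ∀ (a b : G) (y : V), π (a * b) y = π a (π b y) := by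
    intro a b y; rw [map_mul]; rfl
  have hπinv : ∀ (a : G) (y : V), π a (π a⁻¹ y) = y := by
    intro a y; rw [← hπmul, mul_inv_cancel, map_one]; rfl
  have hinv_inner : ∀ (a : G) (w y : V), ⟪π a⁻¹ w, y⟫_ℂ = ⟪w, π a y⟫_ℂ := by
    intro a w y
    rw [← LinearIsometryEquiv.inner_map_map (π a) (π a⁻¹ w) y, hπinv]
  have hcomm : ∀ (h : G) (x : V), π h (A x) = A (π h x) := by
    intro h x
    set L : V →L[ℂ] V := (π h).toLinearIsometry.toContinuousLinearMap with hLdef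
    have hLapp : ∀ w : V, L w = π h w := fun _ => rfl
    calc π h (A x) = L (A x) := (hLapp _).symm
    _ = ∫ g, L ((⟪π g v, x⟫_ℂ) • (π g v)) ∂μ := by
        rw [hAapp]
        exact (ContinuousLinearMap.integral_comp_comm L (hint x)).symm
    _ = ∫ g, (fun g' : G => (⟪π (h⁻¹ * g') v, x⟫_ℂ) • (π g' v)) (h * g) ∂μ := by
        refine integral_congr_ae (Filter.Eventually.of_forall fun g => ?_)
        have h2 : (⟪π g v, x⟫_ℂ) • L (π g v)
            = (⟪π (h⁻¹ * (h * g)) v, x⟫_ℂ) • (π (h * g) v) := by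
          rw [inv_mul_cancel_left, hLapp, ← hπmul]
        exact (L.map_smul _ _).trans h2
    _ = ∫ g, (⟪π (h⁻¹ * g) v, x⟫_ℂ) • (π g v) ∂μ :=
        integral_mul_left_eq_self (fun g' : G => (⟪π (h⁻¹ * g') v, x⟫_ℂ) • (π g' v)) h
    _ = A (π h x) := by
        rw [hAapp]
        refine integral_congr_ae (Filter.Eventually.of_forall fun g => ?_)
        simp only [hπmul, hinv_inner]
  -- the supremum of the quadratic form on the unit ball
  set S : Set ℝ := Q '' {x : V | ‖x‖ ≤ 1} with hSdef
  have hS_ne : S.Nonempty := ⟨Q 0, ⟨0, by simp, rfl⟩⟩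
  have hS_bdd : BddAbove S := by
    refine ⟨‖v‖ ^ 2, ?_⟩
    rintro r ⟨x, hx, rfl⟩
    rw [hQre]
    calc (⟪x, A x⟫_ℂ).re ≤ ‖⟪x, A x⟫_ℂ‖ := Complex.re_le_norm _
    _ ≤ ‖x‖ * ‖A x‖ := norm_inner_le_norm _ _
    _ ≤ ‖x‖ * (‖v‖ ^ 2 * ‖x‖) := by
        exact mul_le_mul_of_nonneg_left (hAbound x) (norm_nonneg _)
    _ ≤ ‖v‖ ^ 2 := by
        simp only [Set.mem_setOf_eq] at hx
        have hx2 : ‖x‖ * ‖x‖ ≤ 1 := by nlinarith [norm_nonneg x]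
        nlinarith [hx2, sq_nonneg ‖v‖]
  have hQ0 : Q 0 = 0 := by rw [hQapp]; simp
  set M : ℝ := sSup S with hMdef
  have hM0 : 0 ≤ M := le_csSup hS_bdd ⟨0, by simp, hQ0⟩
  have hQscale : ∀ (c : ℂ) (x : V), Q (c • x) = ‖c‖ ^ 2 * Q x := by
    intro c x
    rw [hQapp, hQapp, ← integral_const_mul]
    refine integral_congr_ae (Filter.Eventually.of_forall fun g => ?_)
    simp only [inner_smul_left, norm_mul, mul_pow, RCLike.norm_conj]
  have hQle : ∀ x : V, Q x ≤ M * ‖x‖ ^ 2 := by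
    intro x
    rcases eq_or_ne x 0 with rfl | hx
    · simp [hQ0]
    · have hxn : (0:ℝ) < ‖x‖ := norm_pos_iff.2 hx
      have hmem : Q (((‖x‖⁻¹ : ℝ) : ℂ) • x) ∈ S := by
        refine ⟨((‖x‖⁻¹ : ℝ) : ℂ) • x, ?_, rfl⟩
        simp only [Set.mem_setOf_eq, norm_smul, Complex.norm_real, Real.norm_eq_abs,
          abs_of_nonneg (inv_nonneg.2 hxn.le)]
        rw [inv_mul_cancel₀ hxn.ne']
      have h1 := le_csSup hS_bdd hmem
      rw [hQscale] at h1
      have h2 : ‖((‖x‖⁻¹ : ℝ) : ℂ)‖ ^ 2 = (‖x‖ ^ 2)⁻¹ := by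
        rw [Complex.norm_real, Real.norm_eq_abs, abs_of_nonneg (inv_nonneg.2 hxn.le)]
        rw [← inv_pow]
      rw [h2] at h1
      have h3 : (0:ℝ) < ‖x‖ ^ 2 := by positivity
      calc Q x = ((‖x‖ ^ 2)⁻¹ * Q x) * ‖x‖ ^ 2 := by field_simp
      _ ≤ M * ‖x‖ ^ 2 := mul_le_mul_of_nonneg_right h1 h3.le
  have hAle : ∀ x : V, ‖A x‖ ≤ M * ‖x‖ :=
    opNorm_aux A M hM0 hadd hsub hsa
      (fun x => by rw [← hQre]; exact hQnonneg x)
      (fun x => by rw [← hQre]; exact hQle x)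
  -- final reduction
  have hgoal : (∫ g, ‖⟪u, π g v⟫_ℂ‖ ^ 2 ∂μ) = Q u := rfl
  rw [hgoal]
  suffices hfin : M ≤ ‖v‖ ^ 2 / D by
    calc Q u ≤ M * ‖u‖ ^ 2 := hQle u
    _ ≤ (‖v‖ ^ 2 / D) * ‖u‖ ^ 2 := mul_le_mul_of_nonneg_right hfin (sq_nonneg _)
    _ = (D : ℝ)⁻¹ * ‖u‖ ^ 2 * ‖v‖ ^ 2 := by rw [div_eq_mul_inv]; ring
  rcases eq_or_lt_of_le hM0 with hMz | hMpos
  · rw [← hMz]; positivity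
  -- CONTINUATION
  -- a compact convex set containing the image of the unit ball under A
  set K₀ : Set V := (fun p : ℂ × G => p.1 • (π p.2 v)) '' ((Metric.closedBall 0 ‖v‖) ×ˢ Set.univ)
    with hK₀def
  have hK₀comp : IsCompact K₀ :=
    ((isCompact_closedBall 0 ‖v‖).prod isCompact_univ).image
      (continuous_fst.smul ((hπ v).comp continuous_snd))
  set C : Set V := closure (convexHull ℝ K₀) with hCdef
  have hCcomp : IsCompact C :=
    TotallyBounded.isCompact_of_isClosed
      (totallyBounded_closure.mpr (totallyBounded_convexHull.mpr hK₀comp.totallyBounded))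
      isClosed_closure
  have hAC : ∀ x : V, ‖x‖ ≤ 1 → A x ∈ C := by
    intro x hx
    rw [hAapp]
    refine Convex.integral_mem ((convex_convexHull ℝ K₀).closure) isClosed_closure
      (Filter.Eventually.of_forall fun g => ?_) (hint x)
    refine subset_closure (subset_convexHull ℝ K₀ ?_)
    refine ⟨(⟪π g v, x⟫_ℂ, g), ⟨?_, Set.mem_univ g⟩, rfl⟩
    rw [Metric.mem_closedBall, dist_zero_right]
    calc ‖⟪π g v, x⟫_ℂ‖ ≤ ‖π g v‖ * ‖x‖ := norm_inner_le_norm _ _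
    _ ≤ ‖v‖ := by rw [(π g).norm_map]; nlinarith [norm_nonneg v]
  -- a maximizing sequence for Q on the unit ball
  obtain ⟨y, -, hy_tendsto, hy_mem⟩ := exists_seq_tendsto_sSup hS_ne hS_bdd
  have hy_mem' : ∀ nn : ℕ, ∃ x : V, ‖x‖ ≤ 1 ∧ Q x = y nn := by
    intro nn
    rcases hy_mem nn with ⟨x, hx, hQx⟩
    exact ⟨x, hx, hQx⟩
  choose un hun_norm hun_Q using hy_mem'
  have hQun : Filter.Tendsto (fun nn => Q (un nn)) Filter.atTop (nhds M) := by
    rw [hMdef]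
    simpa only [hun_Q] using hy_tendsto
  have hAun : ∀ nn : ℕ, A (un nn) ∈ C := fun nn => hAC (un nn) (hun_norm nn)
  obtain ⟨w, hwC, φ, hφmono, hφconv⟩ := hCcomp.tendsto_subseq hAun
  set d : ℕ → V := fun nn => A (un nn) - (M:ℂ) • un nn with hddef
  have hdapp : ∀ nn, d nn = A (un nn) - (M:ℂ) • un nn := fun _ => rfl
  have hAle' : ∀ nn, ‖A (un nn)‖ ≤ M := by
    intro nn
    refine (hAle (un nn)).trans ?_
    nlinarith [hun_norm nn, hM0]
  have hre_symm : ∀ a c : V, (⟪a, c⟫_ℂ).re = (⟪c, a⟫_ℂ).re := by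
    intro a c; rw [← Complex.conj_re, inner_conj_symm]
  have hd_sq : ∀ nn, ‖d nn‖ ^ 2 ≤ 2 * M ^ 2 - 2 * M * Q (un nn) := by
    intro nn
    have e0 : (‖d nn‖ : ℝ) ^ 2 = (⟪d nn, d nn⟫_ℂ).re :=
      (inner_self_eq_norm_sq (𝕜 := ℂ) (d nn)).symm
    have e1 : ⟪d nn, d nn⟫_ℂ
        = ⟪A (un nn), A (un nn)⟫_ℂ - ⟪A (un nn), (M:ℂ) • un nn⟫_ℂ
          - (⟪(M:ℂ) • un nn, A (un nn)⟫_ℂ - ⟪(M:ℂ) • un nn, (M:ℂ) • un nn⟫_ℂ) := by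
      rw [hdapp]
      simp only [inner_sub_left, inner_sub_right]
      ring
    have r1 : (⟪A (un nn), A (un nn)⟫_ℂ).re = ‖A (un nn)‖ ^ 2 :=
      inner_self_eq_norm_sq (𝕜 := ℂ) _
    have r2 : (⟪A (un nn), (M:ℂ) • un nn⟫_ℂ).re = M * Q (un nn) := by
      rw [inner_smul_right, Complex.re_ofReal_mul, hre_symm, ← hQre]
    have r3 : (⟪(M:ℂ) • un nn, A (un nn)⟫_ℂ).re = M * Q (un nn) := by
      rw [inner_smul_left, Complex.conj_ofReal, Complex.re_ofReal_mul, ← hQre]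
    have r4 : (⟪(M:ℂ) • un nn, (M:ℂ) • un nn⟫_ℂ).re = M ^ 2 * ‖un nn‖ ^ 2 := by
      rw [inner_smul_left, inner_smul_right, Complex.conj_ofReal, ← mul_assoc]
      rw [show ((M:ℂ) * (M:ℂ)) = ((M ^ 2 : ℝ) : ℂ) by push_cast; ring, Complex.re_ofReal_mul]
      have hself : (⟪un nn, un nn⟫_ℂ).re = ‖un nn‖ ^ 2 := inner_self_eq_norm_sq (𝕜 := ℂ) _
      rw [hself]
    have hAn2 : ‖A (un nn)‖ ^ 2 ≤ M ^ 2 := by nlinarith [hAle' nn, norm_nonneg (A (un nn))]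
    have hun2 : ‖un nn‖ ^ 2 ≤ 1 := by nlinarith [hun_norm nn, norm_nonneg (un nn)]
    rw [e0, e1]
    simp only [Complex.sub_re]
    rw [r1, r2, r3, r4]
    nlinarith [hM0]
  have hd0 : Filter.Tendsto (fun nn => ‖d nn‖) Filter.atTop (nhds 0) := by
    have hb2 : Filter.Tendsto (fun nn => 2 * M ^ 2 - 2 * M * Q (un nn)) Filter.atTop
        (nhds (2 * M ^ 2 - 2 * M * M)) :=
      tendsto_const_nhds.sub (hQun.const_mul (2 * M))
    have hz : (2 * M ^ 2 - 2 * M * M : ℝ) = 0 := by ring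
    rw [hz] at hb2
    have hsq : Filter.Tendsto (fun nn => ‖d nn‖ ^ 2) Filter.atTop (nhds 0) :=
      squeeze_zero (fun nn => by positivity) hd_sq hb2
    have := hsq.sqrt
    simpa [Real.sqrt_sq (norm_nonneg _), Real.sqrt_zero] using this
  have hφd : Filter.Tendsto (fun nn => d (φ nn)) Filter.atTop (nhds 0) := by
    refine tendsto_zero_iff_norm_tendsto_zero.mpr ?_
    exact hd0.comp hφmono.tendsto_atTop
  have hMun : Filter.Tendsto (fun nn => (M:ℂ) • un (φ nn)) Filter.atTop (nhds w) := by
    have heq : (fun nn => (M:ℂ) • un (φ nn)) = fun nn => A (un (φ nn)) - d (φ nn) := by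
      funext nn
      rw [hdapp]
      abel
    rw [heq]
    simpa using hφconv.sub hφd
  have hMne : (M:ℂ) ≠ 0 := by
    simpa using Complex.ofReal_ne_zero.mpr hMpos.ne'
  set x₀ : V := (M:ℂ)⁻¹ • w with hx₀def
  have hun_tendsto : Filter.Tendsto (fun nn => un (φ nn)) Filter.atTop (nhds x₀) := by
    have h2 := hMun.const_smul ((M:ℂ)⁻¹)
    have heq : (fun nn => ((M:ℂ))⁻¹ • ((M:ℂ) • un (φ nn))) = fun nn => un (φ nn) := by
      funext nn; exact inv_smul_smul₀ hMne _
    rw [heq] at h2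
    rw [hx₀def]
    exact h2
  have hAx₀w : A x₀ = w := by
    have hbd : ∀ nn, ‖A (un (φ nn)) - A x₀‖ ≤ ‖v‖ ^ 2 * ‖un (φ nn) - x₀‖ := by
      intro nn; rw [← hsub]; exact hAbound _
    have h2 : Filter.Tendsto (fun nn => ‖v‖ ^ 2 * ‖un (φ nn) - x₀‖) Filter.atTop (nhds 0) := by
      have h3 := (hun_tendsto.sub (tendsto_const_nhds (x := x₀))).norm
      simpa using h3.const_mul (‖v‖ ^ 2)
    have h4 : Filter.Tendsto (fun nn => ‖A (un (φ nn)) - A x₀‖) Filter.atTop (nhds 0) :=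
      squeeze_zero (fun nn => norm_nonneg _) hbd h2
    have h5 : Filter.Tendsto (fun nn => A (un (φ nn))) Filter.atTop (nhds (A x₀)) :=
      tendsto_iff_norm_sub_tendsto_zero.mpr h4
    exact tendsto_nhds_unique h5 hφconv
  have hx₀eig : A x₀ = (M:ℂ) • x₀ := by
    rw [hAx₀w, hx₀def, smul_inv_smul₀ hMne]
  have hnorm_un : Filter.Tendsto (fun nn => ‖un (φ nn)‖ ^ 2) Filter.atTop (nhds 1) := by
    have hlow : ∀ nn, Q (un (φ nn)) / M ≤ ‖un (φ nn)‖ ^ 2 := by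
      intro nn
      rw [div_le_iff₀ hMpos]
      linarith [hQle (un (φ nn))]
    have hup : ∀ nn, ‖un (φ nn)‖ ^ 2 ≤ 1 := by
      intro nn
      nlinarith [hun_norm (φ nn), norm_nonneg (un (φ nn))]
    have hQφ : Filter.Tendsto (fun nn => Q (un (φ nn)) / M) Filter.atTop (nhds 1) := by
      have := (hQun.comp hφmono.tendsto_atTop).div_const M
      simpa [div_self hMpos.ne'] using this
    exact tendsto_of_tendsto_of_tendsto_of_le_of_le hQφ tendsto_const_nhds hlow hup
  have hx₀norm : ‖x₀‖ = 1 := by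
    have h1 : Filter.Tendsto (fun nn => ‖un (φ nn)‖ ^ 2) Filter.atTop (nhds (‖x₀‖ ^ 2)) :=
      hun_tendsto.norm.pow 2
    have h2 : ‖x₀‖ ^ 2 = 1 := tendsto_nhds_unique h1 hnorm_un
    nlinarith [norm_nonneg x₀]
  have hx₀ne : x₀ ≠ 0 := by
    intro h; rw [h, norm_zero] at hx₀norm; exact one_ne_zero hx₀norm.symm
  -- the eigenspace
  set E : Submodule ℂ V :=
    { carrier := {x : V | A x = (M:ℂ) • x}
      add_mem' := by
        intro a c ha hc
        simp only [Set.mem_setOf_eq] at *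
        rw [hadd, ha, hc, smul_add]
      zero_mem' := by
        simp only [Set.mem_setOf_eq, smul_zero]
        exact hzero
      smul_mem' := by
        intro c a ha
        simp only [Set.mem_setOf_eq] at *
        rw [hsmul, ha, smul_comm] } with hEdef
  have hmemE : ∀ x : V, x ∈ E ↔ A x = (M:ℂ) • x := fun x => Iff.rfl
  have hx₀E : x₀ ∈ E := hx₀eig
  have hEinv : ∀ (g : G) (x : V), x ∈ E → π g x ∈ E := by
    intro g x hx
    rw [hmemE] at hx ⊢
    rw [← hcomm, hx, _root_.map_smul]
  have hEclosed : IsClosed (E : Set V) := by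
    have hAcont : Continuous A := by
      have hlip : LipschitzWith (‖v‖ ^ 2).toNNReal A := by
        refine LipschitzWith.of_dist_le_mul fun a c => ?_
        rw [dist_eq_norm, dist_eq_norm, ← hsub]
        calc ‖A (a - c)‖ ≤ ‖v‖ ^ 2 * ‖a - c‖ := hAbound _
        _ = (‖v‖ ^ 2).toNNReal * ‖a - c‖ := by
            rw [Real.coe_toNNReal _ (by positivity)]
      exact hlip.continuous
    exact isClosed_eq hAcont (continuous_const_smul _)
  have hball : IsCompact (Metric.closedBall (0:V) 1 ∩ (E : Set V)) := by
    refine IsCompact.of_isClosed_subset (hCcomp.image (continuous_const_smul ((M:ℂ)⁻¹)))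
      (Metric.isClosed_closedBall.inter hEclosed) ?_
    rintro x ⟨hx1, hx2⟩
    refine ⟨A x, hAC x (mem_closedBall_zero_iff.mp hx1), ?_⟩
    have hx3 : A x = (M:ℂ) • x := hx2
    show ((M:ℂ))⁻¹ • A x = x
    rw [hx3, inv_smul_smul₀ hMne]
  have hballE : IsCompact (Metric.closedBall (0 : E) 1) := by
    rw [Topology.IsEmbedding.subtypeVal.isCompact_iff]
    have himg : ((↑) '' Metric.closedBall (0 : E) 1 : Set V)
        = Metric.closedBall (0:V) 1 ∩ (E : Set V) := by
      ext z
      simp only [Set.mem_image, Metric.mem_closedBall, Set.mem_inter_iff, SetLike.mem_coe]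
      constructor
      · rintro ⟨a, ha, rfl⟩
        exact ⟨by simpa [dist_eq_norm] using ha, a.2⟩
      · rintro ⟨h1, h2⟩
        exact ⟨⟨z, h2⟩, by simpa [dist_eq_norm] using h1, rfl⟩
    rw [himg]
    exact hball
  haveI hEfd : FiniteDimensional ℂ E :=
    FiniteDimensional.of_isCompact_closedBall₀ (𝕜 := ℂ) zero_lt_one hballE
  -- the representation of G on E
  set ρ₀ : G → (E ≃ₗᵢ[ℂ] E) := fun g =>
    { toLinearEquiv :=
      { toFun := fun x => ⟨π g x, hEinv g x x.2⟩
        map_add' := by intro a c; apply Subtype.ext; simp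
        map_smul' := by intro c a; apply Subtype.ext; simp
        invFun := fun x => ⟨π g⁻¹ x, hEinv g⁻¹ x x.2⟩
        left_inv := by
          intro a; apply Subtype.ext
          show π g⁻¹ (π g (a : V)) = (a : V)
          rw [← hπmul, inv_mul_cancel, map_one]; rfl
        right_inv := by
          intro a; apply Subtype.ext
          show π g (π g⁻¹ (a : V)) = (a : V)
          exact hπinv g (a : V) }
      norm_map' := fun a => (π g).norm_map (a : V) } with hρ₀def
  have hρ₀app : ∀ (g : G) (x : E), ((ρ₀ g x : E) : V) = π g (x : V) := fun _ _ => rfl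
  set ρ : G →* (E ≃ₗᵢ[ℂ] E) :=
    { toFun := ρ₀
      map_one' := by
        apply LinearIsometryEquiv.ext; intro x; apply Subtype.ext
        show π 1 (x : V) = (x : V)
        rw [map_one]; rfl
      map_mul' := by
        intro a c
        apply LinearIsometryEquiv.ext; intro x; apply Subtype.ext
        show π (a * c) (x : V) = π a (π c (x : V))
        exact hπmul a c (x : V) } with hρdef
  set nE : ℕ := Module.finrank ℂ E with hndef
  set b := stdOrthonormalBasis ℂ E with hbdef
  set e : E ≃ₗᵢ[ℂ] EuclideanSpace ℂ (Fin nE) := b.repr with hedef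
  set ρ' : G →* (EuclideanSpace ℂ (Fin nE) ≃ₗᵢ[ℂ] EuclideanSpace ℂ (Fin nE)) :=
    { toFun := fun g => (e.symm.trans (ρ g)).trans e
      map_one' := by
        apply LinearIsometryEquiv.ext; intro x
        simp [map_one]
      map_mul' := by
        intro g h
        apply LinearIsometryEquiv.ext; intro x
        simp [map_mul] } with hρ'def
  have hρ'app : ∀ (g : G) (z : EuclideanSpace ℂ (Fin nE)), ρ' g z = e (ρ g (e.symm z)) :=
    fun _ _ => rfl
  have hρ'cont : ∀ z : EuclideanSpace ℂ (Fin nE), Continuous fun g : G => ρ' g z := by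
    intro z
    have h1 : Continuous fun g : G => (π g (↑(e.symm z) : V)) := hπ _
    have h2 : Continuous fun g : G => (ρ g (e.symm z) : E) := h1.subtype_mk _
    exact e.continuous.comp h2
  have hρ'nontriv : ∃ (g : G) (z : EuclideanSpace ℂ (Fin nE)), ρ' g z ≠ z := by
    by_contra hcon
    push_neg at hcon
    have hall : ∀ g : G, π g x₀ = x₀ := by
      intro g
      have h1 := hcon g (e ⟨x₀, hx₀E⟩)
      rw [hρ'app] at h1
      have h2 : ρ g ⟨x₀, hx₀E⟩ = ⟨x₀, hx₀E⟩ := by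
        apply e.injective
        rw [e.symm_apply_apply] at h1
        exact h1
      exact congrArg Subtype.val h2
    exact hx₀ne (hfix x₀ hall)
  have hDn : D ≤ nE := by
    have := hQR (EuclideanSpace ℂ (Fin nE)) ρ' hρ'cont hρ'nontriv
    simpa [finrank_euclideanSpace_fin] using this
  -- Bessel inequality gives the trace bound
  have hbON := b.orthonormal
  have hfON : Orthonormal ℂ (fun i : Fin nE => ((b i : E) : V)) := by
    rw [orthonormal_iff_ite]
    intro i j
    rw [← Submodule.coe_inner]
    rw [orthonormal_iff_ite] at hbON
    exact hbON i j
  have hQb : ∀ i : Fin nE, Q ((b i : E) : V) = M := by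
    intro i
    have hmem : ((b i : E) : V) ∈ E := (b i).2
    rw [hmemE] at hmem
    rw [hQre, hmem, inner_smul_right, Complex.re_ofReal_mul]
    have hself : (⟪((b i : E) : V), ((b i : E) : V)⟫_ℂ).re = ‖((b i : E) : V)‖ ^ 2 :=
      inner_self_eq_norm_sq (𝕜 := ℂ) _
    have hnb : ‖((b i : E) : V)‖ = 1 := hbON.1 i
    rw [hself, hnb]; ring
  have hsum : (nE : ℝ) * M ≤ ‖v‖ ^ 2 := by
    have hs1 : ∑ i : Fin nE, Q ((b i : E) : V) = (nE : ℝ) * M := by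
      simp [hQb, Finset.sum_const, Finset.card_univ, nsmul_eq_mul]
    have hexp : ∑ i : Fin nE, Q ((b i : E) : V)
        = ∫ g, ∑ i : Fin nE, ‖⟪((b i : E) : V), π g v⟫_ℂ‖ ^ 2 ∂μ := by
      simp_rw [hQapp]
      rw [integral_finset_sum _ (fun i _ => hQint _)]
    have hle2 : ∀ g : G, ∑ i : Fin nE, ‖⟪((b i : E) : V), π g v⟫_ℂ‖ ^ 2 ≤ ‖v‖ ^ 2 := by
      intro g
      refine (hfON.sum_inner_products_le (π g v)).trans_eq ?_
      rw [(π g).norm_map]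
    have hs2 : ∑ i : Fin nE, Q ((b i : E) : V) ≤ ‖v‖ ^ 2 := by
      rw [hexp]
      calc ∫ g, ∑ i : Fin nE, ‖⟪((b i : E) : V), π g v⟫_ℂ‖ ^ 2 ∂μ
          ≤ ∫ _g, ‖v‖ ^ 2 ∂μ :=
            integral_mono (integrable_finset_sum _ (fun i _ => hQint _))
              (integrable_const _) hle2
      _ = ‖v‖ ^ 2 := by simp [measure_univ]
    linarith [hs1 ▸ hs2]
  have hn_pos : (0:ℝ) < (nE : ℝ) := by exact_mod_cast hD.trans_le hDn
  have h1 : M ≤ ‖v‖ ^ 2 / nE := by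
    rw [le_div_iff₀ hn_pos]
    linarith [hsum]
  refine h1.trans ?_
  have hD' : (0:ℝ) < (D:ℝ) := by exact_mod_cast hD
  have hDn' : (D:ℝ) ≤ (nE:ℝ) := by exact_mod_cast hDn
  exact div_le_div_of_nonneg_left (sq_nonneg _) hD' hDn'
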